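/- For every natural number k ≥ 9, the least common multiple of the numbers 1, 2, ..., k is at least 2^k. -/

import Mathlib

open Nat Finset

private lemma emult_mul_choose_le {p n k : ℕ} (hp : p.Prime) (hk0 : k ≠ 0) (hkn : k ≤ n) :
    emultiplicity p (k * n.choose k) ≤ (Nat.log p n : ℕ∞) := by
  have hn0 : 0 < n := lt_of_lt_of_le (Nat.pos_of_ne_zero hk0) hkn
  set b := Nat.log p n + 1 with hb
  have hlogk : Nat.log p k < b := lt_of_le_of_lt (Nat.log_mono_right hkn) (Nat.lt_succ_self _)
  have hdisj :
      Disjoint {i ∈ Ico 1 b | p ^ i ≤ k % p ^ i + (n - k) % p ^ i}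
        {i ∈ Ico 1 b | p ^ i ∣ k} := by
    simp +contextual [Finset.disjoint_right, dvd_iff_mod_eq_zero,
      Nat.mod_lt _ (pow_pos hp.pos _)]
  rw [hp.emultiplicity_mul,
    Nat.emultiplicity_eq_card_pow_dvd hp.ne_one (Nat.pos_of_ne_zero hk0) hlogk,
    hp.emultiplicity_choose hkn (Nat.lt_succ_self _), ← Nat.cast_add]
  rw [Nat.cast_le, add_comm, ← Finset.card_union_of_disjoint hdisj, Finset.filter_union_right]
  calc _ ≤ (Ico 1 b).card := Finset.card_filter_le _ _
    _ = Nat.log p n := by rw [Nat.card_Ico]; omega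

private lemma factorization_mul_choose_le {p n k : ℕ} (hk0 : k ≠ 0) (hkn : k ≤ n) :
    (k * n.choose k).factorization p ≤ Nat.log p n := by
  by_cases hp : p.Prime
  · have hpos : 0 < k * n.choose k :=
      Nat.mul_pos (Nat.pos_of_ne_zero hk0) (Nat.choose_pos hkn)
    have hfin : FiniteMultiplicity p (k * n.choose k) :=
      Nat.finiteMultiplicity_iff.2 ⟨hp.ne_one, hpos⟩
    have := emult_mul_choose_le hp hk0 hkn
    rw [hfin.emultiplicity_eq_multiplicity, Nat.cast_le] at this
    rwa [Nat.multiplicity_eq_factorization hp hpos.ne'] at this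
  · simp [Nat.factorization_eq_zero_of_not_prime _ hp]

private lemma mul_choose_dvd_lcm {n k : ℕ} (hk0 : k ≠ 0) (hkn : k ≤ n) :
    k * n.choose k ∣ (Finset.Icc 1 n).lcm id := by
  have hn0 : 0 < n := lt_of_lt_of_le (Nat.pos_of_ne_zero hk0) hkn
  have hL : (Finset.Icc 1 n).lcm id ≠ 0 := by
    rw [Ne, Finset.lcm_eq_zero_iff]
    simp only [Set.mem_image, Finset.mem_coe, Finset.mem_Icc, id]
    rintro ⟨x, ⟨hx, -⟩, rfl⟩; omega
  have hpos : 0 < k * n.choose k :=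
    Nat.mul_pos (Nat.pos_of_ne_zero hk0) (Nat.choose_pos hkn)
  rw [← Nat.factorization_le_iff_dvd hpos.ne' hL]
  intro p
  by_cases hp : p.Prime
  · refine (factorization_mul_choose_le hk0 hkn).trans ?_
    rw [← Nat.Prime.pow_dvd_iff_le_factorization hp hL]
    refine Finset.dvd_lcm ?_
    rw [Finset.mem_Icc]
    exact ⟨Nat.one_le_pow _ _ hp.pos, Nat.pow_log_le_self p hn0.ne'⟩
  · simp [Nat.factorization_eq_zero_of_not_prime _ hp]

theorem nair_lcm_lower_bound (k : ℕ) (hk : 9 ≤ k) :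
    2 ^ k ≤ (Finset.Icc 1 k).lcm id := by
  set n := (k - 1) / 2 with hn
  have hn4 : 4 ≤ n := by omega
  have hk1 : 2 * n + 1 ≤ k := by omega
  have hk2 : k ≤ 2 * n + 2 := by omega
  set C := (2 * n).choose n with hC
  have h1 : n * C ∣ (Finset.Icc 1 (2 * n)).lcm id :=
    mul_choose_dvd_lcm (by omega) (by omega)
  have h1' : n * C ∣ (Finset.Icc 1 (2 * n + 1)).lcm id :=
    h1.trans (Finset.lcm_mono (Finset.Icc_subset_Icc le_rfl (by omega)))
  have hid : (2 * n + 1) * C = (2 * n + 1).choose (n + 1) * (n + 1) :=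
    Nat.add_one_mul_choose_eq (2 * n) n
  have h2 : (2 * n + 1) * C ∣ (Finset.Icc 1 (2 * n + 1)).lcm id := by
    rw [hid, mul_comm]
    exact mul_choose_dvd_lcm (by omega) (by omega)
  have hcop : Nat.Coprime n (2 * n + 1) := by
    unfold Nat.Coprime
    have : Nat.gcd n (1 + 2 * n) = Nat.gcd n 1 := Nat.gcd_add_mul_right_right n 1 2
    rw [show 2 * n + 1 = 1 + 2 * n by ring, this, Nat.gcd_one_right]
  have hl : Nat.lcm (n * C) ((2 * n + 1) * C) ∣ (Finset.Icc 1 (2 * n + 1)).lcm id :=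
    Nat.lcm_dvd h1' h2
  rw [Nat.lcm_mul_right, Nat.Coprime.lcm_eq_mul hcop] at hl
  have hL : (Finset.Icc 1 (2 * n + 1)).lcm id ∣ (Finset.Icc 1 k).lcm id :=
    Finset.lcm_mono (Finset.Icc_subset_Icc le_rfl hk1)
  have hdvd : n * (2 * n + 1) * C ∣ (Finset.Icc 1 k).lcm id := hl.trans hL
  have hLpos : 0 < (Finset.Icc 1 k).lcm id := by
    rcases Nat.eq_zero_or_pos ((Finset.Icc 1 k).lcm id) with h | h
    · rw [Finset.lcm_eq_zero_iff] at h
      simp only [Set.mem_image, Finset.mem_coe, Finset.mem_Icc, id] at h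
      obtain ⟨x, ⟨hx, -⟩, hx0⟩ := h
      omega
    · exact h
  have hle : n * (2 * n + 1) * C ≤ (Finset.Icc 1 k).lcm id := Nat.le_of_dvd hLpos hdvd
  have hcb : 4 ^ n < n * C := Nat.four_pow_lt_mul_centralBinom n hn4
  calc 2 ^ k ≤ 2 ^ (2 * n + 2) := Nat.pow_le_pow_right (by norm_num) hk2
    _ = 4 * 4 ^ n := by rw [pow_add, pow_mul]; ring
    _ ≤ (2 * n + 1) * 4 ^ n := by
        exact Nat.mul_le_mul_right _ (by omega)
    _ ≤ (2 * n + 1) * (n * C) := Nat.mul_le_mul_left _ hcb.le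
    _ = n * (2 * n + 1) * C := by ring
    _ ≤ _ := hle
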